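/- arXiv:2509.05024 — 2 statements merged into one kernel-verified Lean document; each statement's English description precedes it below -/
import Mathlib

section
/- Let f : ℕ+ → ℕ+ and n ∈ ℕ+, and define φ : ℤ → ℕ recursively by φ(x) = 0 for x < 1, φ(x) = 1 for 1 ≤ x ≤ f(n), and φ(x) = max over ⌈x/3⌉ ≤ y ≤ ⌊2x/3⌋ of (φ(y) + φ(x - f(x) - y)) + 1 otherwise. Then for all x ≥ f(n), φ(x) ≤ 6x/f(n) - 1. -/
/-- If `f : ℕ → ℕ` takes positive values (encoding `f : ℕ+ → ℕ+`),
`n` is positive, and `φ : ℤ → ℕ` satisfies the separation-tree recurrence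
(with `⌈x/3⌉ ≤ y ≤ ⌊2x/3⌋` the balance range and `f x` vertices removed by the
separator), then for all `x ≥ f n` we have `φ x ≤ 6x / f n - 1`, stated in the
integer-division-free form `f n * (φ x + 1) ≤ 6 * x`. -/
theorem stmt_0 (f : ℕ → ℕ) (hf : ∀ m, 0 < f m) (n : ℕ) (hn : 0 < n)
    (φ : ℤ → ℕ)
    (h0 : ∀ x : ℤ, x < 1 → φ x = 0)
    (h1 : ∀ x : ℤ, 1 ≤ x → x ≤ (f n : ℤ) → φ x = 1)
    (h2 : ∀ x : ℤ, (f n : ℤ) < x →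
      φ x = (Finset.Icc ((x + 2) / 3) ((2 * x) / 3)).sup
        (fun y => φ y + φ (x - (f x.toNat : ℤ) - y)) + 1) :
    ∀ x : ℤ, (f n : ℤ) ≤ x → (f n : ℤ) * (φ x + 1) ≤ 6 * x := by
  have hF1 : (1 : ℤ) ≤ (f n : ℤ) := by exact_mod_cast hf n
  have key : ∀ k : ℕ, ∀ x : ℤ, x ≤ (k : ℤ) → (f n : ℤ) ≤ x →
      (f n : ℤ) * (φ x + 1) ≤ 6 * x := by
    intro k
    induction k with
    | zero => intro x hx hFx; omega
    | succ k ih =>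
      intro x hxk hFx
      by_cases hxF : x ≤ (f n : ℤ)
      · rw [h1 x (le_trans hF1 hFx) hxF]
        push_cast
        nlinarith
      · push_neg at hxF
        rw [h2 x hxF]
        rcases Finset.eq_empty_or_nonempty (Finset.Icc ((x + 2) / 3) ((2 * x) / 3)) with
          he | hne
        · rw [he, Finset.sup_empty]
          simp only [bot_eq_zero]
          push_cast
          linarith
        · obtain ⟨y, hy, hSval⟩ := Finset.exists_mem_eq_sup _ hne
            (fun y => φ y + φ (x - (f x.toNat : ℤ) - y))
          rw [hSval]
          rw [Finset.mem_Icc] at hy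
          have hy1 : 1 ≤ y := by omega
          have hy3 : x ≤ 3 * y := by omega
          have hy4 : 6 * y ≤ 4 * x := by omega
          have hyx : y < x := by omega
          have hg1 : (1 : ℤ) ≤ (f x.toNat : ℤ) := by exact_mod_cast hf x.toNat
          set g : ℤ := (f x.toNat : ℤ) with hg
          set z : ℤ := x - g - y with hz
          -- bound for y
          have hA : (f n : ℤ) * (φ y + 1) ≤ 6 * y := by
            by_cases hyF : y ≤ (f n : ℤ)
            · rw [h1 y hy1 hyF]; push_cast; linarith
            · push_neg at hyF
              exact ih y (by omega) (le_of_lt hyF)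
          -- bound for z, three cases
          rcases lt_or_ge z 1 with hz1 | hz1
          · rw [h0 z hz1]
            push_cast
            linarith
          · rcases le_or_gt z (f n : ℤ) with hzF | hzF
            · rw [h1 z hz1 hzF]
              push_cast
              linarith
            · have hB : (f n : ℤ) * (φ z + 1) ≤ 6 * z :=
                ih z (by omega) (le_of_lt hzF)
              push_cast
              have : 6 * z = 6 * x - 6 * g - 6 * y := by rw [hz]; ring
              nlinarith
  intro x hFx
  exact key x.toNat x (by omega) hFx
end

section
/- Let G be a finite simple graph, and suppose V(G) = A ∪ B ∪ S with A, B, S pairwise disjoint, no edges between A and B, and the robber's current territory R (the set of vertices possibly occupied by an uncaught robber) satisfies R ⊆ A ∪ B ∪ S. If cops occupy all of S in the current round (catching the robber if it is in S) and remain on S in every subsequent round, then in every subsequent round the robber's territory is contained in A or contained in B — namely in whichever of A, B contained the robber's position when the cops occupied S. -/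
/-- Suppose `V(G) = A ∪ B ∪ S` pairwise disjoint with no edges between
`A` and `B`. If from time `t₀` on cops occupy all of `S` (so an uncaught robber is
never on `S` from time `t₀` on), then the robber remains forever in whichever of
`A`, `B` contained it at time `t₀`. -/
theorem stmt_14 {V : Type*} [Fintype V] (G : SimpleGraph V) (A B S : Set V)
    (hcover : A ∪ B ∪ S = Set.univ)
    (hAB : Disjoint A B) (hAS : Disjoint A S) (hBS : Disjoint B S)
    (hsep : ∀ a ∈ A, ∀ b ∈ B, ¬ G.Adj a b)
    (r : ℕ → V) (hmove : ∀ t, r (t + 1) = r t ∨ G.Adj (r t) (r (t + 1)))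
    (t₀ : ℕ) (hnotcaught : ∀ t ≥ t₀, r t ∉ S) :
    (r t₀ ∈ A → ∀ t ≥ t₀, r t ∈ A) ∧ (r t₀ ∈ B → ∀ t ≥ t₀, r t ∈ B) := by
  have hAorB : ∀ t ≥ t₀, r t ∈ A ∨ r t ∈ B := by
    intro t ht
    have : r t ∈ A ∪ B ∪ S := by rw [hcover]; trivial
    rcases this with (h | h) | h
    · exact Or.inl h
    · exact Or.inr h
    · exact absurd h (hnotcaught t ht)
  constructor
  · intro hA t ht
    induction t, ht using Nat.le_induction with
    | base => exact hA
    | succ n hn ih =>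
      rcases hAorB (n + 1) (by omega) with h | h
      · exact h
      · exfalso
        rcases hmove n with heq | hadj
        · exact hAB.ne_of_mem ih h heq.symm
        · exact hsep _ ih _ h hadj
  · intro hB t ht
    induction t, ht using Nat.le_induction with
    | base => exact hB
    | succ n hn ih =>
      rcases hAorB (n + 1) (by omega) with h | h
      · exfalso
        rcases hmove n with heq | hadj
        · exact hAB.ne_of_mem h ih heq
        · exact hsep _ h _ ih hadj.symm
      · exact h
end
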